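/- Let P be a finite set of probability mass functions on a finite set X, all strictly positive, let p ∈ P, N a positive integer, and δ ∈ (0,1). Then with probability at least 1 − δ over an i.i.d. sample D = (X_1,…,X_N) ∼ p^{⊗N}, simultaneously for all p' ∈ P: Σ_{i=1}^N [ −log(p(X_i)/p'(X_i)) + H²(p, p') ] ≤ 2·log(|P|/δ). -/

import Mathlib

open scoped Classical

theorem uniform_likelihood_hellinger_bound
    {X : Type*} [Fintype X] (P : Finset (X → ℝ)) (p : X → ℝ) (hpP : p ∈ P)
    (N : ℕ) (hN : 0 < N) (δ : ℝ) (hδ0 : 0 < δ) (hδ1 : δ < 1)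
    (hpos : ∀ q ∈ P, ∀ x, 0 < q x) (hsum : ∀ q ∈ P, ∑ x, q x = 1) :
    1 - δ ≤ ∑ D ∈ Finset.univ.filter (fun D : Fin N → X =>
        ∀ p' ∈ P,
          ∑ i, (-Real.log (p (D i) / p' (D i))
                + ∑ x, (Real.sqrt (p x) - Real.sqrt (p' x)) ^ 2)
            ≤ 2 * Real.log (P.card / δ)),
      ∏ i, p (D i) := by
  classical
  have hcard : 0 < (P.card : ℝ) := by
    exact_mod_cast Finset.card_pos.2 ⟨p, hpP⟩
  set w : (Fin N → X) → ℝ := fun D => ∏ i, p (D i) with hw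
  have hwpos : ∀ D, 0 < w D := fun D => Finset.prod_pos (fun i _ => hpos p hpP _)
  have hwsum : ∑ D : Fin N → X, w D = 1 := by
    rw [hw, ← Fintype.sum_pow, hsum p hpP, one_pow]
  set cond : (X → ℝ) → (Fin N → X) → Prop := fun p' D =>
    ∑ i, (-Real.log (p (D i) / p' (D i))
        + ∑ x, (Real.sqrt (p x) - Real.sqrt (p' x)) ^ 2)
      ≤ 2 * Real.log (P.card / δ) with hcond
  -- key per-p' bound
  have key : ∀ p' ∈ P,
      ∑ D ∈ Finset.univ.filter (fun D => ¬ cond p' D), w D ≤ δ / P.card := by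
    intro p' hp'
    have hppos : ∀ x, 0 < p x := hpos p hpP
    have hp'pos : ∀ x, 0 < p' x := hpos p' hp'
    set H : ℝ := ∑ x, (Real.sqrt (p x) - Real.sqrt (p' x)) ^ 2 with hH
    set s : ℝ := ∑ x, Real.sqrt (p x * p' x) with hs
    have hs0 : 0 ≤ s := Finset.sum_nonneg fun x _ => Real.sqrt_nonneg _
    have hHs : H = 2 - 2 * s := by
      have : ∀ x : X, (Real.sqrt (p x) - Real.sqrt (p' x)) ^ 2
          = p x + p' x - 2 * Real.sqrt (p x * p' x) := by
        intro x
        rw [sub_sq, Real.sq_sqrt (hppos x).le, Real.sq_sqrt (hp'pos x).le,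
          Real.sqrt_mul (hppos x).le]
        ring
      rw [hH]
      simp only [this]
      rw [Finset.sum_sub_distrib, Finset.sum_add_distrib, hsum p hpP, hsum p' hp',
        ← Finset.mul_sum, ← hs]
      ring
    have hsexp : s ≤ Real.exp (-(H / 2)) := by
      have := Real.add_one_le_exp (-(H / 2))
      have hs1 : s = 1 - H / 2 := by rw [hHs]; ring
      linarith
    set Z : (Fin N → X) → ℝ := fun D => ∏ i, Real.sqrt (p' (D i) / p (D i)) with hZ
    have hZpos : ∀ D, 0 < Z D := fun D =>
      Finset.prod_pos fun i _ => Real.sqrt_pos.2 (div_pos (hp'pos _) (hppos _))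
    have hE : ∑ D : Fin N → X, w D * Z D = s ^ N := by
      have hterm : ∀ D : Fin N → X, w D * Z D = ∏ i, Real.sqrt (p (D i) * p' (D i)) := by
        intro D
        rw [hw, hZ, ← Finset.prod_mul_distrib]
        refine Finset.prod_congr rfl fun i _ => ?_
        have ha := hppos (D i); have hb := hp'pos (D i)
        rw [← Real.sqrt_sq ha.le, ← Real.sqrt_mul (sq_nonneg _)]
        congr 1
        field_simp
        simp [Real.sqrt_sq ha.le]
      simp only [hterm]
      rw [hs, Fintype.sum_pow]
    set t : ℝ := (P.card / δ) * Real.exp (-(N * H / 2)) with ht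
    have ht0 : 0 < t := mul_pos (div_pos hcard hδ0) (Real.exp_pos _)
    have hbad : ∀ D : Fin N → X, ¬ cond p' D → t ≤ Z D := by
      intro D hD
      rw [hcond] at hD
      push_neg at hD
      have hlogZ : Real.log (Z D) = (∑ i, Real.log (p' (D i) / p (D i))) / 2 := by
        rw [hZ, Real.log_prod
          (fun i _ => (Real.sqrt_pos.2 (div_pos (hp'pos _) (hppos _))).ne'), Finset.sum_div]
        exact Finset.sum_congr rfl fun i _ =>
          Real.log_sqrt (div_pos (hp'pos _) (hppos _)).le
      have hneg : ∀ i : Fin N, -Real.log (p (D i) / p' (D i))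
          = Real.log (p' (D i) / p (D i)) := by
        intro i
        rw [← Real.log_inv]
        congr 1
        field_simp
      have hsumD : ∑ i, (-Real.log (p (D i) / p' (D i)) + H)
          = (∑ i, Real.log (p' (D i) / p (D i))) + N * H := by
        simp only [hneg]
        rw [Finset.sum_add_distrib, Finset.sum_const, Finset.card_univ, Fintype.card_fin,
          nsmul_eq_mul]
      rw [← hH] at hD
      rw [hsumD] at hD
      have hlt : Real.log t < Real.log (Z D) := by
        rw [ht, Real.log_mul (by positivity) (Real.exp_ne_zero _), Real.log_exp, hlogZ]
        linarith
      exact le_of_lt ((Real.log_lt_log_iff ht0 (hZpos _)).1 hlt)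
    -- Markov
    have hMarkov : ∑ D ∈ Finset.univ.filter (fun D => ¬ cond p' D), w D
        ≤ (∑ D : Fin N → X, w D * Z D) / t := by
      rw [Finset.sum_div]
      calc ∑ D ∈ Finset.univ.filter (fun D => ¬ cond p' D), w D
          ≤ ∑ D ∈ Finset.univ.filter (fun D => ¬ cond p' D), w D * Z D / t := by
            refine Finset.sum_le_sum fun D hD => ?_
            have hDt := hbad D (Finset.mem_filter.1 hD).2
            rw [le_div_iff₀ ht0]
            exact mul_le_mul_of_nonneg_left hDt (hwpos D).le
        _ ≤ ∑ D : Fin N → X, w D * Z D / t := by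
            exact Finset.sum_le_sum_of_subset_of_nonneg (Finset.filter_subset _ _)
              fun D _ _ => div_nonneg (mul_nonneg (hwpos D).le (hZpos D).le) ht0.le
    have hsN : s ^ N ≤ Real.exp (-(N * H / 2)) := by
      calc s ^ N ≤ Real.exp (-(H / 2)) ^ N := pow_le_pow_left₀ hs0 hsexp N
        _ = Real.exp (-(N * H / 2)) := by
            rw [← Real.exp_nat_mul]; ring_nf
    calc ∑ D ∈ Finset.univ.filter (fun D => ¬ cond p' D), w D
        ≤ (∑ D : Fin N → X, w D * Z D) / t := hMarkov
      _ = s ^ N / t := by rw [hE]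
      _ ≤ Real.exp (-(N * H / 2)) / t := by gcongr
      _ = δ / P.card := by
          rw [ht]
          field_simp
  -- union bound
  set bad := Finset.univ.filter (fun D : Fin N → X => ¬ ∀ p' ∈ P, cond p' D) with hbadset
  have hunion : ∑ D ∈ bad, w D ≤ δ := by
    have step1 : ∑ D ∈ bad, w D
        ≤ ∑ D ∈ bad, ∑ p' ∈ P, (if ¬ cond p' D then w D else 0) := by
      refine Finset.sum_le_sum fun D hD => ?_
      have hD' := (Finset.mem_filter.1 hD).2
      push_neg at hD'
      obtain ⟨q, hqP, hq⟩ := hD'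
      calc w D = (if ¬ cond q D then w D else 0) := by simp [hq]
        _ ≤ ∑ p' ∈ P, (if ¬ cond p' D then w D else 0) :=
            Finset.single_le_sum (f := fun r => if ¬ cond r D then w D else 0)
              (fun r _ => by by_cases h : cond r D <;> simp [h, (hwpos D).le]) hqP
    have step2 : ∑ D ∈ bad, ∑ p' ∈ P, (if ¬ cond p' D then w D else 0)
        ≤ ∑ p' ∈ P, (δ / P.card) := by
      rw [Finset.sum_comm]
      refine Finset.sum_le_sum fun p' hp' => ?_
      calc ∑ D ∈ bad, (if ¬ cond p' D then w D else 0)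
          ≤ ∑ D : Fin N → X, (if ¬ cond p' D then w D else 0) := by
            exact Finset.sum_le_sum_of_subset_of_nonneg (Finset.filter_subset _ _)
              fun D _ _ => by by_cases h : cond p' D <;> simp [h, (hwpos D).le]
        _ = ∑ D ∈ Finset.univ.filter (fun D => ¬ cond p' D), w D := by
            rw [Finset.sum_filter]
        _ ≤ δ / P.card := key p' hp'
    have step3 : ∑ p' ∈ P, (δ / (P.card : ℝ)) = δ := by
      rw [Finset.sum_const, nsmul_eq_mul]
      field_simp
    linarith
  have hsplit : (∑ D ∈ Finset.univ.filter (fun D : Fin N → X => ∀ p' ∈ P, cond p' D), w D)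
      + ∑ D ∈ bad, w D = 1 := by
    rw [hbadset, Finset.sum_filter_add_sum_filter_not, hwsum]
  have : 1 - δ ≤ ∑ D ∈ Finset.univ.filter (fun D : Fin N → X => ∀ p' ∈ P, cond p' D), w D := by
    linarith
  exact this
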